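/- Let n > m ≥ 0 and define H(j,k) = (−1)^{b(j,k)} for j, k ∈ {0, …, 2ⁿ − 1}, where b(j,k) is the number of bit positions at which the binary expansions of j and k both have a 1. For 0 ≤ i ≤ 2^{n−m} − 1, let W_i be the span in ℝ^{2ⁿ−2^m} of the vectors (H(j, i·2^m + r))_{2^m ≤ j ≤ 2ⁿ−1} for 0 ≤ r ≤ 2^m − 1, and let P_i be the orthogonal projection onto W_i. Then ∑_{i=0}^{2^{n−m}−1} P_i = (2ⁿ/(2ⁿ − 2^m)) · Id; in particular {W_i} is a tight fusion frame for ℝ^{2ⁿ−2^m} with fusion frame bound 2ⁿ/(2ⁿ − 2^m). -/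

import Mathlib

open scoped InnerProductSpace

/-- `bitOverlap j k` is the number of bit positions at which the binary
expansions of `j` and `k` both have a `1`. -/
def bitOverlap (j k : ℕ) : ℕ := (Nat.land j k).bits.count true

lemma count_bits (x : ℕ) :
    x.bits.count true = (if x.bodd then 1 else 0) + x.div2.bits.count true := by
  rcases Nat.eq_zero_or_pos x with h | h
  · subst h; rw [Nat.zero_bits]; simp [Nat.bodd_zero, Nat.div2_zero]
  · conv_lhs => rw [← Nat.bit_bodd_div2 x]
    rw [Nat.bits_append_bit _ _ (fun h0 => by
      by_contra hb
      simp only [Bool.not_eq_true] at hb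
      have := Nat.bodd_add_div2 x
      rw [h0, hb] at this; simp at this; omega)]
    cases hb : x.bodd <;> simp [List.count_cons, Nat.add_comm]


lemma land_eq (c k : ℕ) : Nat.land c k = c &&& k := rfl

lemma bodd_testBit (x : ℕ) : x.bodd = x.testBit 0 := by
  rw [Nat.testBit_zero]
  rcases hb : x.bodd <;> simp [Nat.mod_two_of_bodd, hb]

lemma land_div2 (c k : ℕ) : (Nat.land c k).div2 = Nat.land c.div2 k.div2 := by
  simp only [Nat.div2_val, land_eq]
  apply Nat.eq_of_testBit_eq
  intro t
  simp [Nat.testBit_div_two, Nat.testBit_land]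

lemma land_bodd (c k : ℕ) : (Nat.land c k).bodd = (c.bodd && k.bodd) := by
  rw [bodd_testBit, bodd_testBit, bodd_testBit, land_eq, Nat.testBit_land]

lemma bitOverlap_rec (c k : ℕ) :
    bitOverlap c k = (if c.bodd && k.bodd then 1 else 0) + bitOverlap c.div2 k.div2 := by
  unfold bitOverlap
  rw [count_bits, land_div2, land_bodd]

noncomputable def F (c k : ℕ) : ℝ := (-1 : ℝ) ^ bitOverlap c k

lemma F_rec (c k : ℕ) :
    F c k = (if c.bodd && k.bodd then (-1 : ℝ) else 1) * F c.div2 k.div2 := by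
  unfold F
  rw [bitOverlap_rec, pow_add]
  by_cases h : c.bodd && k.bodd <;> simp [h]

lemma bitOverlap_zero_right (c : ℕ) : bitOverlap c 0 = 0 := by
  unfold bitOverlap
  simp [land_eq]

lemma F_zero_right (c : ℕ) : F c 0 = 1 := by
  simp [F, bitOverlap_zero_right]

lemma F_mul (k : ℕ) : ∀ a b : ℕ, F a k * F b k = F (a ^^^ b) k := by
  induction k using Nat.strong_induction_on with
  | _ k ih =>
    intro a b
    rcases Nat.eq_zero_or_pos k with hk | hk
    · subst hk; simp [F_zero_right]
    · have hdiv : k.div2 < k := (by rw [Nat.div2_val]; omega)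
      have hbodd : (a ^^^ b).bodd = (a.bodd).xor b.bodd := by
        rw [bodd_testBit, bodd_testBit, bodd_testBit, Nat.testBit_xor]
      have hdiv2 : (a ^^^ b).div2 = a.div2 ^^^ b.div2 := by
        simp only [Nat.div2_val]
        apply Nat.eq_of_testBit_eq
        intro t
        simp [Nat.testBit_div_two, Nat.testBit_xor]
      rw [F_rec a k, F_rec b k, F_rec (a ^^^ b) k, hbodd, hdiv2, ← ih k.div2 hdiv]
      cases ha : a.bodd <;> cases hb : b.bodd <;> cases hkb : k.bodd <;> simp <;> ring

lemma sum_range_double (N : ℕ) (f : ℕ → ℝ) :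
    ∑ k ∈ Finset.range (2 * N), f k = ∑ q ∈ Finset.range N, (f (2 * q) + f (2 * q + 1)) := by
  induction N with
  | zero => simp
  | succ N ih =>
    rw [Nat.mul_succ, Finset.sum_range_succ, Finset.sum_range_succ, Finset.sum_range_succ, ih]
    rw [add_assoc]

lemma F_sum (n : ℕ) : ∀ c : ℕ, c < 2 ^ n →
    ∑ k ∈ Finset.range (2 ^ n), F c k = if c = 0 then (2 ^ n : ℝ) else 0 := by
  induction n with
  | zero =>
    intro c hc
    interval_cases c
    simp [F_zero_right]
  | succ n ih =>
    intro c hc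
    have h2 : 2 ^ (n + 1) = 2 * 2 ^ n := by ring
    rw [h2, sum_range_double]
    have hterm : ∀ q : ℕ, F c (2 * q) + F c (2 * q + 1) =
        (1 + if c.bodd then (-1 : ℝ) else 1) * F c.div2 q := by
      intro q
      have he : (2 * q).bodd = false := by simp [Nat.bodd_mul]
      have ho : (2 * q + 1).bodd = true := by simp [Nat.bodd_succ, Nat.bodd_mul]
      have hde : (2 * q).div2 = q := by simp [Nat.div2_val]
      have hdo : (2 * q + 1).div2 = q := by
        rw [Nat.div2_val]; omega
      rw [F_rec c (2 * q), F_rec c (2 * q + 1), he, ho, hde, hdo]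
      cases hcb : c.bodd <;> simp <;> ring
    simp_rw [hterm]
    rw [← Finset.mul_sum]
    cases hcb : c.bodd
    · have hce : 2 * c.div2 = c := by
        have := Nat.bodd_add_div2 c
        rw [hcb] at this; simpa using this
      have hcd : c.div2 < 2 ^ n := by omega
      rw [ih c.div2 hcd]
      by_cases hc0 : c = 0
      · simp only [hc0, show (0:ℕ).div2 = 0 from rfl, if_true, if_pos rfl]
        norm_num [pow_succ]; ring
      · simp [hc0, show c.div2 ≠ 0 by omega]
    · have hc0 : c ≠ 0 := by
        intro h; subst h; simp at hcb
      simp [hcb, hc0]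

lemma F_orth (n a b : ℕ) (ha : a < 2 ^ n) (hb : b < 2 ^ n) :
    ∑ k ∈ Finset.range (2 ^ n), F a k * F b k = if a = b then (2 ^ n : ℝ) else 0 := by
  simp_rw [F_mul]
  rw [F_sum n _ (Nat.xor_lt_two_pow ha hb)]
  simp [xor_eq_zero_iff]

lemma F_comm (a k : ℕ) : F a k = F k a := by
  unfold F bitOverlap
  simp only [show ∀ c k : ℕ, Nat.land c k = c &&& k from fun _ _ => rfl, Nat.land_comm]

lemma bitOverlap_low (m j i r : ℕ) (hj : j < 2 ^ m) :
    bitOverlap j (i * 2 ^ m + r) = bitOverlap j (r % 2 ^ m) := by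
  unfold bitOverlap
  have he : ∀ c k : ℕ, Nat.land c k = c &&& k := fun _ _ => rfl
  have key : Nat.land j (i * 2 ^ m + r) = Nat.land j (r % 2 ^ m) := by
    simp only [he]
    apply Nat.eq_of_testBit_eq
    intro t
    simp only [Nat.testBit_land]
    by_cases ht : t < m
    · have h1 : (r % 2 ^ m).testBit t = ((i * 2 ^ m + r) % 2 ^ m).testBit t := by
        rw [Nat.mul_comm, Nat.mul_add_mod]
      rw [h1, Nat.testBit_mod_two_pow]
      simp [ht]
    · have : j.testBit t = false :=
        Nat.testBit_lt_two_pow (lt_of_lt_of_le hj (Nat.pow_le_pow_right (by norm_num) (by omega)))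
      simp [this]
  rw [key]

lemma sum_range_add' (a b : ℕ) (f : ℕ → ℝ) :
    ∑ k ∈ Finset.range (a + b), f k
      = ∑ k ∈ Finset.range a, f k + ∑ j ∈ Finset.range b, f (a + j) := by
  induction b with
  | zero => simp
  | succ b ih => rw [← Nat.add_assoc, Finset.sum_range_succ, ih, Finset.sum_range_succ, add_assoc]

lemma sum_blocks (I M : ℕ) (f : ℕ → ℝ) :
    ∑ i ∈ Finset.range I, ∑ r ∈ Finset.range M, f (i * M + r)
      = ∑ k ∈ Finset.range (I * M), f k := by
  induction I with
  | zero => simp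
  | succ I ih =>
    rw [Finset.sum_range_succ, ih, Nat.succ_mul, sum_range_add']

lemma lt_pow_of_block {n m i r : ℕ} (hmn : m ≤ n) (hi : i < 2 ^ (n - m)) (hr : r < 2 ^ m) :
    i * 2 ^ m + r < 2 ^ n := by
  have h1 : (i + 1) * 2 ^ m ≤ 2 ^ (n - m) * 2 ^ m := Nat.mul_le_mul_right _ hi
  have h2 : 2 ^ (n - m) * 2 ^ m = 2 ^ n := by
    rw [← pow_add, Nat.sub_add_cancel hmn]
  have h3 : i * 2 ^ m + r < (i + 1) * 2 ^ m := by
    rw [Nat.succ_mul]; omega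
  omega

section Main
variable (n m : ℕ)

noncomputable def uvec (i r : ℕ) : EuclideanSpace ℝ (Fin (2 ^ n - 2 ^ m)) :=
  WithLp.toLp 2 (fun j : Fin (2 ^ n - 2 ^ m) => (-1 : ℝ) ^ bitOverlap (j.val + 2 ^ m) (i * 2 ^ m + r))

lemma uvec_apply (i r : ℕ) (j : Fin (2 ^ n - 2 ^ m)) :
    uvec n m i r j = F (j.val + 2 ^ m) (i * 2 ^ m + r) := rfl

lemma inner_uvec (y : EuclideanSpace ℝ (Fin (2 ^ n - 2 ^ m))) (i r : ℕ) :
    ⟪uvec n m i r, y⟫_ℝ = ∑ j : Fin (2 ^ n - 2 ^ m), uvec n m i r j * y j := by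
  simp [PiLp.inner_apply, RCLike.inner_apply, conj_trivial]
  exact Finset.sum_congr rfl fun _ _ => mul_comm _ _

lemma uvec_inner (hmn : m < n) (i : ℕ) (hi : i < 2 ^ (n - m)) (r r' : ℕ)
    (hr : r < 2 ^ m) (hr' : r' < 2 ^ m) :
    ⟪uvec n m i r, uvec n m i r'⟫_ℝ
      = if r = r' then ((2 ^ n - 2 ^ m : ℕ) : ℝ) else 0 := by
  have hMN : 2 ^ m ≤ 2 ^ n := Nat.pow_le_pow_right (by norm_num) hmn.le
  set a := i * 2 ^ m + r with ha
  set b := i * 2 ^ m + r' with hb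
  have haN : a < 2 ^ n := lt_pow_of_block hmn.le hi hr
  have hbN : b < 2 ^ n := lt_pow_of_block hmn.le hi hr'
  rw [inner_uvec]
  simp only [uvec_apply]
  rw [Fin.sum_univ_eq_sum_range (fun j => F (j + 2 ^ m) a * F (j + 2 ^ m) b)]
  have hsplit : ∑ k ∈ Finset.range (2 ^ n), F k a * F k b
      = ∑ k ∈ Finset.range (2 ^ m), F k a * F k b
        + ∑ j ∈ Finset.range (2 ^ n - 2 ^ m), F (j + 2 ^ m) a * F (j + 2 ^ m) b := by
    rw [show (2 : ℕ) ^ n = 2 ^ m + (2 ^ n - 2 ^ m) by omega, sum_range_add']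
    simp [Nat.add_comm]
  have hfull : ∑ k ∈ Finset.range (2 ^ n), F k a * F k b = if a = b then ((2 ^ n : ℕ) : ℝ) else 0 := by
    simp_rw [fun k => (F_comm k a), fun k => (F_comm k b)]
    rw [F_orth n a b haN hbN]; norm_num
  have hlow : ∑ k ∈ Finset.range (2 ^ m), F k a * F k b = if r = r' then ((2 ^ m : ℕ) : ℝ) else 0 := by
    have : ∀ k ∈ Finset.range (2 ^ m), F k a * F k b = F r k * F r' k := by
      intro k hk
      rw [Finset.mem_range] at hk
      have h1 : F k a = F r k := by
        rw [F_comm r k]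
        unfold F
        rw [ha, bitOverlap_low m k i r hk, Nat.mod_eq_of_lt hr]
      have h2 : F k b = F r' k := by
        rw [F_comm r' k]
        unfold F
        rw [hb, bitOverlap_low m k i r' hk, Nat.mod_eq_of_lt hr']
      rw [h1, h2]
    rw [Finset.sum_congr rfl this, F_orth m r r' hr hr']; norm_num
  have hab : a = b ↔ r = r' := by rw [ha, hb]; omega
  have := hsplit
  rw [hfull, hlow] at this
  by_cases h : r = r'
  · rw [if_pos h]
    have : ∑ j ∈ Finset.range (2 ^ n - 2 ^ m), F (j + 2 ^ m) a * F (j + 2 ^ m) b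
        = ((2 ^ n : ℕ) : ℝ) - ((2 ^ m : ℕ) : ℝ) := by
      rw [if_pos (hab.mpr h), if_pos h] at this; linarith
    rw [this]; push_cast [hMN]; ring
  · rw [if_neg h]
    rw [if_neg (fun hh => h (hab.mp hh)), if_neg h] at this; linarith

lemma uvec_sum (hmn : m < n) (j j' : Fin (2 ^ n - 2 ^ m)) :
    ∑ i ∈ Finset.range (2 ^ (n - m)), ∑ r ∈ Finset.range (2 ^ m),
        uvec n m i r j * uvec n m i r j'
      = if j = j' then ((2 ^ n : ℕ) : ℝ) else 0 := by
  simp only [uvec_apply]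
  rw [sum_blocks (2 ^ (n - m)) (2 ^ m) (fun k => F (j.val + 2 ^ m) k * F (j'.val + 2 ^ m) k),
    show 2 ^ (n - m) * 2 ^ m = 2 ^ n by rw [← pow_add, Nat.sub_add_cancel hmn.le]]
  have hj : j.val + 2 ^ m < 2 ^ n := by have := j.isLt; omega
  have hj' : j'.val + 2 ^ m < 2 ^ n := by have := j'.isLt; omega
  rw [F_orth n _ _ hj hj']
  have : j.val + 2 ^ m = j'.val + 2 ^ m ↔ j = j' := by
    constructor
    · intro h; exact Fin.ext (by omega)
    · intro h; rw [h]
  simp only [this]; norm_num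
end Main


lemma euclid_sum_apply {d : ℕ} {ι : Type*} (s : Finset ι)
    (f : ι → EuclideanSpace ℝ (Fin d)) (j : Fin d) :
    (∑ i ∈ s, f i) j = ∑ i ∈ s, f i j := by
  induction s using Finset.cons_induction with
  | empty => rfl
  | cons a s ha ih =>
    rw [Finset.sum_cons, Finset.sum_cons, PiLp.add_apply, ih]


/-- The subspaces `W_i` spanned by blocks of `2^m` consecutive truncated columns
of the Sylvester matrix form a tight fusion frame for `ℝ^{2ⁿ−2^m}`:
`∑ i, P_i = (2ⁿ/(2ⁿ − 2^m)) · Id`. -/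
theorem stmt_13 (n m : ℕ) (hmn : m < n)
    (W : Fin (2 ^ (n - m)) → Submodule ℝ (EuclideanSpace ℝ (Fin (2 ^ n - 2 ^ m))))
    (hW : ∀ i : Fin (2 ^ (n - m)),
      W i = Submodule.span ℝ (Set.range (fun r : Fin (2 ^ m) =>
        (WithLp.toLp 2 (fun j : Fin (2 ^ n - 2 ^ m) =>
          ((-1 : ℝ) ^ bitOverlap (j.val + 2 ^ m) (i.val * 2 ^ m + r.val))) :
            EuclideanSpace ℝ (Fin (2 ^ n - 2 ^ m)))))) :
    ∀ x : EuclideanSpace ℝ (Fin (2 ^ n - 2 ^ m)),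
      (∑ i : Fin (2 ^ (n - m)),
          ((W i).orthogonalProjectionOnto x : EuclideanSpace ℝ (Fin (2 ^ n - 2 ^ m)))) =
        ((2 ^ n : ℝ) / ((2 ^ n : ℝ) - 2 ^ m)) • x := by
  intro x
  have hMN : 2 ^ m < 2 ^ n := Nat.pow_lt_pow_right (by norm_num) hmn
  have hd0 : (0 : ℝ) < ((2 ^ n - 2 ^ m : ℕ) : ℝ) := by
    have : 0 < 2 ^ n - 2 ^ m := by omega
    exact_mod_cast this
  have hdR : ((2 ^ n - 2 ^ m : ℕ) : ℝ) = (2 ^ n : ℝ) - 2 ^ m := by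
    push_cast [Nat.cast_sub hMN.le]; ring
  have hWu : ∀ i : Fin (2 ^ (n - m)),
      W i = Submodule.span ℝ (Set.range (fun r : Fin (2 ^ m) => uvec n m i.val r.val)) :=
    fun i => hW i
  have hproj : ∀ i : Fin (2 ^ (n - m)),
      ((W i).orthogonalProjectionOnto x : EuclideanSpace ℝ (Fin (2 ^ n - 2 ^ m)))
        = ∑ r : Fin (2 ^ m),
            ((((2 ^ n - 2 ^ m : ℕ) : ℝ))⁻¹ * ⟪uvec n m i.val r.val, x⟫_ℝ) • uvec n m i.val r.val := by
    intro i
    apply Submodule.eq_starProjection_of_mem_of_inner_eq_zero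
    · rw [hWu i]
      exact Submodule.sum_mem _ fun r _ =>
        Submodule.smul_mem _ _ (Submodule.subset_span ⟨r, rfl⟩)
    · intro w hw
      rw [hWu i] at hw
      induction hw using Submodule.span_induction with
      | mem v hv =>
        obtain ⟨r', rfl⟩ := hv
        rw [inner_sub_left, sub_eq_zero, sum_inner]
        have hterm : ∀ r : Fin (2 ^ m),
            ⟪((((2 ^ n - 2 ^ m : ℕ) : ℝ))⁻¹ * ⟪uvec n m i.val r.val, x⟫_ℝ) • uvec n m i.val r.val,
              uvec n m i.val r'.val⟫_ℝ
            = if r = r' then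
                (((2 ^ n - 2 ^ m : ℕ) : ℝ))⁻¹ * ⟪uvec n m i.val r.val, x⟫_ℝ * ((2 ^ n - 2 ^ m : ℕ) : ℝ)
              else 0 := by
          intro r
          rw [real_inner_smul_left,
            uvec_inner n m hmn i.val i.isLt r.val r'.val r.isLt r'.isLt]
          by_cases h : r = r' <;> simp [Fin.val_inj, h]
        simp_rw [hterm]
        rw [Finset.sum_ite_eq' Finset.univ r'
          (fun r => (((2 ^ n - 2 ^ m : ℕ) : ℝ))⁻¹ * ⟪uvec n m i.val r.val, x⟫_ℝ * ((2 ^ n - 2 ^ m : ℕ) : ℝ))]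
        rw [if_pos (Finset.mem_univ r'), real_inner_comm]
        field_simp
      | zero => simp
      | add a b _ _ ha hb => rw [inner_add_right, ha, hb, add_zero]
      | smul c v _ hv => rw [real_inner_smul_right, hv, mul_zero]
  simp_rw [hproj]
  have hsum : ∀ j j' : Fin (2 ^ n - 2 ^ m),
      ∑ i : Fin (2 ^ (n - m)), ∑ r : Fin (2 ^ m),
          uvec n m i.val r.val j * uvec n m i.val r.val j'
        = if j = j' then ((2 ^ n : ℕ) : ℝ) else 0 := by
    intro j j'
    have h1 : ∀ i : ℕ, ∑ r : Fin (2 ^ m), uvec n m i r.val j * uvec n m i r.val j'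
        = ∑ r ∈ Finset.range (2 ^ m), uvec n m i r j * uvec n m i r j' :=
      fun i => Fin.sum_univ_eq_sum_range (fun r => uvec n m i r j * uvec n m i r j') (2 ^ m)
    calc ∑ i : Fin (2 ^ (n - m)), ∑ r : Fin (2 ^ m), uvec n m i.val r.val j * uvec n m i.val r.val j'
        = ∑ i ∈ Finset.range (2 ^ (n - m)), ∑ r ∈ Finset.range (2 ^ m),
            uvec n m i r j * uvec n m i r j' := by
          rw [Fin.sum_univ_eq_sum_range
            (fun i => ∑ r : Fin (2 ^ m), uvec n m i r.val j * uvec n m i r.val j') (2 ^ (n - m))]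
          exact Finset.sum_congr rfl fun i _ => h1 i
      _ = if j = j' then ((2 ^ n : ℕ) : ℝ) else 0 := uvec_sum n m hmn j j'
  ext j
  rw [euclid_sum_apply, PiLp.smul_apply, smul_eq_mul]
  have step1 : ∀ i : Fin (2 ^ (n - m)),
      (∑ r : Fin (2 ^ m),
        ((((2 ^ n - 2 ^ m : ℕ) : ℝ))⁻¹ * ⟪uvec n m i.val r.val, x⟫_ℝ) • uvec n m i.val r.val) j
      = ∑ r : Fin (2 ^ m), ∑ j' : Fin (2 ^ n - 2 ^ m),
          (((2 ^ n - 2 ^ m : ℕ) : ℝ))⁻¹ * x j' * (uvec n m i.val r.val j * uvec n m i.val r.val j') := by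
    intro i
    rw [euclid_sum_apply]
    refine Finset.sum_congr rfl fun r _ => ?_
    rw [PiLp.smul_apply, smul_eq_mul, inner_uvec]
    rw [Finset.mul_sum, Finset.sum_mul]
    exact Finset.sum_congr rfl fun j' _ => by ring
  simp_rw [step1]
  have step2 : ∀ i : Fin (2 ^ (n - m)),
      ∑ r : Fin (2 ^ m), ∑ j' : Fin (2 ^ n - 2 ^ m),
        (((2 ^ n - 2 ^ m : ℕ) : ℝ))⁻¹ * x j' * (uvec n m i.val r.val j * uvec n m i.val r.val j')
      = ∑ j' : Fin (2 ^ n - 2 ^ m), ∑ r : Fin (2 ^ m),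
        (((2 ^ n - 2 ^ m : ℕ) : ℝ))⁻¹ * x j' * (uvec n m i.val r.val j * uvec n m i.val r.val j') :=
    fun i => Finset.sum_comm
  simp_rw [step2]
  rw [Finset.sum_comm]
  have step3 : ∀ j' : Fin (2 ^ n - 2 ^ m),
      ∑ i : Fin (2 ^ (n - m)), ∑ r : Fin (2 ^ m),
        (((2 ^ n - 2 ^ m : ℕ) : ℝ))⁻¹ * x j' * (uvec n m i.val r.val j * uvec n m i.val r.val j')
      = if j = j' then (((2 ^ n - 2 ^ m : ℕ) : ℝ))⁻¹ * x j' * ((2 ^ n : ℕ) : ℝ) else 0 := by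
    intro j'
    simp_rw [← Finset.mul_sum]
    rw [hsum j j']
    by_cases h : j = j' <;> simp [h]
  simp_rw [step3]
  rw [Finset.sum_ite_eq Finset.univ j
    (fun j' => (((2 ^ n - 2 ^ m : ℕ) : ℝ))⁻¹ * x j' * ((2 ^ n : ℕ) : ℝ))]
  rw [if_pos (Finset.mem_univ j)]
  rw [hdR]
  push_cast
  field_simp
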